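/- arXiv:2302.07565 — 5 statements merged into one kernel-verified Lean document; each statement's English description precedes it below -/
import Mathlib

section
/- For every integer ℓ ≥ 1 and every real number x, φ_ℓ(x) > φ_{ℓ+1}(x). -/
open MeasureTheory intervalIntegral Set
open scoped ENNReal NNReal

lemma beta_nat (m n : ℕ) :
    ∫ θ in (0:ℝ)..1, θ ^ m * (1 - θ) ^ n
      = (Nat.factorial m * Nat.factorial n : ℝ) / Nat.factorial (m + n + 1) := by
  induction n generalizing m with
  | zero =>
    simp only [pow_zero, mul_one, integral_pow, Nat.factorial_zero, Nat.cast_one, Nat.add_zero]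
    rw [Nat.factorial_succ]
    push_cast
    have : (m : ℝ) + 1 ≠ 0 := by positivity
    field_simp
    simp
  | succ n ih =>
    have hu : ∀ θ ∈ uIcc (0:ℝ) 1, HasDerivAt (fun θ : ℝ => (1 - θ) ^ (n+1))
        (-(((n:ℝ)+1) * (1 - θ) ^ n)) θ := by
      intro θ _
      have h1 : HasDerivAt (fun θ : ℝ => 1 - θ) (-1) θ := by
        simpa using (hasDerivAt_id θ).const_sub 1
      have := h1.fun_pow (n+1)
      simpa [mul_comm, mul_assoc, mul_left_comm] using this
    have hv : ∀ θ ∈ uIcc (0:ℝ) 1, HasDerivAt (fun θ : ℝ => θ ^ (m+1) / ((m:ℝ)+1))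
        (θ ^ m) θ := by
      intro θ _
      have h1 := (hasDerivAt_pow (m+1) θ).div_const ((m:ℝ)+1)
      have hm : (m : ℝ) + 1 ≠ 0 := by positivity
      convert h1 using 1
      · rfl
      · rfl
      · rw [Nat.add_sub_cancel]; push_cast
        field_simp
    have hc : Continuous fun θ : ℝ => -(((n:ℝ)+1) * (1 - θ) ^ n) := by continuity
    have hint := intervalIntegral.integral_mul_deriv_eq_deriv_mul hu hv
      (hc.intervalIntegrable 0 1) ((continuous_pow m).intervalIntegrable 0 1)
    have hswap : ∀ θ : ℝ, θ ^ m * (1 - θ) ^ (n+1) = (1 - θ) ^ (n+1) * θ ^ m := fun θ => mul_comm _ _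
    simp_rw [hswap]
    rw [hint]
    have key : ∫ θ in (0:ℝ)..1, -(((n:ℝ)+1) * (1 - θ) ^ n) * (θ ^ (m+1) / ((m:ℝ)+1))
        = -(((n:ℝ)+1) / ((m:ℝ)+1)) * ∫ θ in (0:ℝ)..1, θ ^ (m+1) * (1 - θ) ^ n := by
      rw [← intervalIntegral.integral_const_mul]
      congr 1
      ext θ
      ring
    rw [key, ih (m+1)]
    have hm : (m : ℝ) + 1 ≠ 0 := by positivity
    have e1 : (m + 1) + n + 1 = m + (n + 1) + 1 := by ring
    rw [e1]
    have hfac : (Nat.factorial (m + (n+1) + 1) : ℝ) ≠ 0 := by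
      exact_mod_cast Nat.factorial_ne_zero _
    rw [Nat.factorial_succ m, Nat.factorial_succ n]
    push_cast
    field_simp
    ring

noncomputable def phiR (ℓ : ℕ) (x : ℝ) : ℝ :=
  ∑' k : ℕ, x ^ k / (Nat.factorial (k + ℓ) : ℝ)

lemma phi_int (j : ℕ) (x : ℝ) :
    (Nat.factorial j : ℝ) * phiR (j+1) x
      = ∫ θ in (0:ℝ)..1, Real.exp ((1-θ)*x) * θ ^ j := by
  have hexp : ∀ θ : ℝ, Real.exp ((1-θ)*x) * θ ^ j
      = ∑' n : ℕ, ((1-θ)*x) ^ n / (Nat.factorial n : ℝ) * θ ^ j := by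
    intro θ
    rw [Real.exp_eq_exp_ℝ, NormedSpace.exp_eq_tsum_div, ← tsum_mul_right]
  rw [intervalIntegral.integral_of_le zero_le_one]
  simp_rw [hexp]
  have hmeas : ∀ n : ℕ, AEStronglyMeasurable
      (fun θ : ℝ => ((1-θ)*x) ^ n / (Nat.factorial n : ℝ) * θ ^ j)
      (volume.restrict (Ioc (0:ℝ) 1)) := by
    intro n
    exact (Continuous.aestronglyMeasurable (by continuity))
  have hbound : ∀ n : ℕ, ∫⁻ θ in Ioc (0:ℝ) 1,
      ‖((1-θ)*x) ^ n / (Nat.factorial n : ℝ) * θ ^ j‖₊ ∂volume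
      ≤ ENNReal.ofReal (|x| ^ n / (Nat.factorial n : ℝ)) := by
    intro n
    have h1 : ∀ θ ∈ Ioc (0:ℝ) 1,
        (‖((1-θ)*x) ^ n / (Nat.factorial n : ℝ) * θ ^ j‖₊ : ℝ≥0∞)
          ≤ ENNReal.ofReal (|x| ^ n / (Nat.factorial n : ℝ)) := by
      intro θ hθ
      rw [← enorm_eq_nnnorm, ← ofReal_norm]
      apply ENNReal.ofReal_le_ofReal
      have hθ0 : 0 < θ := hθ.1
      have hθ1 : θ ≤ 1 := hθ.2
      have h1θ : |1 - θ| ≤ 1 := by rw [abs_le]; constructor <;> linarith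
      have hn : (0:ℝ) < Nat.factorial n := by positivity
      rw [norm_mul, norm_div, norm_pow, norm_pow]
      have e1 : ‖(1-θ)*x‖ ^ n ≤ |x| ^ n := by
        apply pow_le_pow_left₀ (norm_nonneg _)
        rw [norm_mul]
        calc ‖(1-θ)‖ * ‖x‖ ≤ 1 * ‖x‖ := by
              apply mul_le_mul_of_nonneg_right h1θ (norm_nonneg _)
          _ = |x| := by rw [one_mul, Real.norm_eq_abs]
      have e2 : ‖θ‖ ^ j ≤ 1 := by
        rw [Real.norm_eq_abs, abs_of_pos hθ0]
        exact pow_le_one₀ hθ0.le hθ1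
      calc ‖(1-θ)*x‖ ^ n / ‖(Nat.factorial n : ℝ)‖ * ‖θ‖ ^ j
          ≤ ‖(1-θ)*x‖ ^ n / ‖(Nat.factorial n : ℝ)‖ * 1 := by
            apply mul_le_mul_of_nonneg_left e2 (by positivity)
        _ ≤ |x| ^ n / (Nat.factorial n : ℝ) := by
            rw [mul_one, Real.norm_natCast]
            gcongr
    calc ∫⁻ θ in Ioc (0:ℝ) 1, ‖((1-θ)*x) ^ n / (Nat.factorial n : ℝ) * θ ^ j‖₊ ∂volume
        ≤ ∫⁻ _ in Ioc (0:ℝ) 1, ENNReal.ofReal (|x| ^ n / (Nat.factorial n : ℝ)) ∂volume :=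
          setLIntegral_mono' measurableSet_Ioc h1
      _ = ENNReal.ofReal (|x| ^ n / (Nat.factorial n : ℝ)) := by
          rw [setLIntegral_const]; simp
  have hsum : ∑' n : ℕ, ∫⁻ θ in Ioc (0:ℝ) 1,
      ‖((1-θ)*x) ^ n / (Nat.factorial n : ℝ) * θ ^ j‖₊ ∂volume ≠ ⊤ := by
    apply ne_top_of_le_ne_top _ (ENNReal.tsum_le_tsum hbound)
    rw [← ENNReal.ofReal_tsum_of_nonneg (fun n => by positivity)
      (Real.summable_pow_div_factorial |x|)]
    exact ENNReal.ofReal_ne_top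
  rw [MeasureTheory.integral_tsum hmeas hsum]
  have hterm : ∀ n : ℕ, ∫ θ in Ioc (0:ℝ) 1, ((1-θ)*x) ^ n / (Nat.factorial n : ℝ) * θ ^ j
      = (Nat.factorial j : ℝ) * (x ^ n / (Nat.factorial (n + (j+1)) : ℝ)) := by
    intro n
    have e : ∀ θ : ℝ, ((1-θ)*x) ^ n / (Nat.factorial n : ℝ) * θ ^ j
        = (x ^ n / (Nat.factorial n : ℝ)) * (θ ^ j * (1-θ) ^ n) := by
      intro θ; rw [mul_pow]; ring
    simp_rw [e]
    rw [MeasureTheory.integral_const_mul, ← intervalIntegral.integral_of_le zero_le_one,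
      beta_nat j n]
    have h1 : (Nat.factorial n : ℝ) ≠ 0 := by positivity
    have h2 : (Nat.factorial (j + n + 1) : ℝ) ≠ 0 := by positivity
    have e2 : n + (j + 1) = j + n + 1 := by ring
    rw [e2]
    field_simp
  simp_rw [hterm]
  rw [tsum_mul_left]
  rfl

theorem phiR_strict_mono (ℓ : ℕ) (hℓ : 1 ≤ ℓ) (x : ℝ) :
    phiR (ℓ + 1) x < phiR ℓ x := by
  obtain ⟨j, rfl⟩ : ∃ j, ℓ = j + 1 := ⟨ℓ - 1, (Nat.succ_pred_eq_of_pos hℓ).symm⟩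
  have hj : (0:ℝ) < Nat.factorial j := by positivity
  have hj1 : (0:ℝ) < Nat.factorial (j+1) := by positivity
  have e1 : phiR (j+1) x
      = (∫ θ in (0:ℝ)..1, Real.exp ((1-θ)*x) * θ ^ j) / Nat.factorial j := by
    rw [← phi_int j x]; field_simp
  have e2 : phiR (j+1+1) x
      = (∫ θ in (0:ℝ)..1, Real.exp ((1-θ)*x) * θ ^ (j+1)) / Nat.factorial (j+1) := by
    rw [← phi_int (j+1) x]; field_simp
  have hc1 : Continuous fun θ : ℝ => Real.exp ((1-θ)*x) * θ ^ j / Nat.factorial j := by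
    continuity
  have hc2 : Continuous fun θ : ℝ => Real.exp ((1-θ)*x) * θ ^ (j+1) / Nat.factorial (j+1) := by
    continuity
  have hdiff : phiR (j+1) x - phiR (j+1+1) x
      = ∫ θ in (0:ℝ)..1, (Real.exp ((1-θ)*x) * θ ^ j / Nat.factorial j
          - Real.exp ((1-θ)*x) * θ ^ (j+1) / Nat.factorial (j+1)) := by
    rw [intervalIntegral.integral_sub (hc1.intervalIntegrable 0 1)
      (hc2.intervalIntegrable 0 1), intervalIntegral.integral_div,
      intervalIntegral.integral_div, e1, e2]
  have hpos : 0 < phiR (j+1) x - phiR (j+1+1) x := by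
    rw [hdiff]
    apply intervalIntegral.intervalIntegral_pos_of_pos_on
    · exact ((hc1.sub hc2)).intervalIntegrable 0 1
    · intro θ hθ
      obtain ⟨hθ0, hθ1⟩ := hθ
      have hE : 0 < Real.exp ((1-θ)*x) := Real.exp_pos _
      have hP : 0 < θ ^ j := pow_pos hθ0 j
      have hfs : (Nat.factorial (j+1) : ℝ) = ((j:ℝ)+1) * Nat.factorial j := by
        rw [Nat.factorial_succ]; push_cast; ring
      have key : Real.exp ((1-θ)*x) * θ ^ j / Nat.factorial j
          - Real.exp ((1-θ)*x) * θ ^ (j+1) / Nat.factorial (j+1)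
          = Real.exp ((1-θ)*x) * θ ^ j * (((j:ℝ)+1) - θ) / (((j:ℝ)+1) * Nat.factorial j) := by
        rw [hfs, pow_succ]
        field_simp
      rw [key]
      apply div_pos
      · have : ((j:ℝ)+1) - θ > 0 := by
          have : θ < 1 := hθ1
          have hj0 : (0:ℝ) ≤ j := Nat.cast_nonneg j
          linarith
        positivity
      · positivity
    · exact zero_lt_one
  linarith
end

section
/- For every integer ℓ ≥ 1 and every real number x, 0 < 1 - φ_{ℓ+1}(x)/φ_ℓ(x) < 1. -/
namespace PhiAux

/-- partial sums of exp series -/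
noncomputable def P (ℓ : ℕ) (x : ℝ) : ℝ := ∑ j ∈ Finset.range ℓ, x ^ j / (Nat.factorial j : ℝ)

lemma summable (ℓ : ℕ) (x : ℝ) :
    Summable (fun k : ℕ => x ^ k / (Nat.factorial (k + ℓ) : ℝ)) := by
  apply Summable.of_norm
  apply Summable.of_nonneg_of_le (fun k => norm_nonneg _)
    (fun k => ?_) (Real.summable_pow_div_factorial |x|)
  rw [Real.norm_eq_abs, abs_div, abs_pow, abs_of_nonneg (by positivity : (0:ℝ) ≤ (Nat.factorial (k+ℓ) : ℝ))]
  apply div_le_div_of_nonneg_left (pow_nonneg (abs_nonneg x) k)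
    (by exact_mod_cast Nat.factorial_pos k)
  exact_mod_cast Nat.factorial_le (Nat.le_add_right k ℓ)

lemma exp_eq (ℓ : ℕ) (x : ℝ) : Real.exp x = P ℓ x + x ^ ℓ * phiR ℓ x := by
  have hexp : Real.exp x = ∑' n : ℕ, x ^ n / (Nat.factorial n : ℝ) := by
    rw [Real.exp_eq_exp_ℝ, NormedSpace.exp_eq_tsum_div]
  have hsum : Summable (fun n : ℕ => x ^ n / (Nat.factorial n : ℝ)) :=
    Real.summable_pow_div_factorial x
  rw [hexp, ← Summable.sum_add_tsum_nat_add ℓ hsum, P]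
  congr 1
  rw [phiR, ← tsum_mul_left]
  exact tsum_congr fun k => by rw [pow_add]; ring

lemma continuous_P (n : ℕ) : Continuous (P n) := by
  unfold P
  exact continuous_finset_sum _ fun j _ => (continuous_pow j).div_const _

lemma hasDerivAt_P (n : ℕ) (x : ℝ) : HasDerivAt (P (n + 1)) (P n x) x := by
  have h : HasDerivAt (P (n + 1))
      (∑ j ∈ Finset.range (n + 1), (j : ℝ) * x ^ (j - 1) / (Nat.factorial j : ℝ)) x := by
    apply HasDerivAt.fun_sum
    intro j _
    simpa [div_eq_mul_inv, mul_comm, mul_assoc] using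
      ((hasDerivAt_pow j x).div_const (Nat.factorial j : ℝ))
  convert h using 1
  rw [P, Finset.sum_range_succ']
  simp only [Nat.cast_zero, zero_mul, zero_div, add_zero]
  apply Finset.sum_congr rfl
  intro j _
  rw [Nat.factorial_succ]
  push_cast
  field_simp

/-- Key sign fact: for x < 0, (-1)^ℓ (e^x - P ℓ x) > 0. -/
lemma sign_remainder : ∀ ℓ : ℕ, ∀ x : ℝ, x < 0 →
    0 < (-1 : ℝ) ^ ℓ * (Real.exp x - P ℓ x) := by
  intro ℓ
  induction ℓ with
  | zero =>
    intro x _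
    simp [P, Real.exp_pos x]
  | succ n ih =>
    intro x hx
    have hder : ∀ y : ℝ, HasDerivAt (fun z => (-1 : ℝ) ^ (n + 1) * (Real.exp z - P (n + 1) z))
        ((-1 : ℝ) ^ (n + 1) * (Real.exp y - P n y)) y := by
      intro y
      exact (((Real.hasDerivAt_exp y).sub (hasDerivAt_P n y)).const_mul _)
    have hanti : StrictAntiOn (fun z => (-1 : ℝ) ^ (n + 1) * (Real.exp z - P (n + 1) z))
        (Set.Iic (0 : ℝ)) := by
      apply strictAntiOn_of_deriv_neg (convex_Iic 0)
      · exact (continuous_const.mul (Real.continuous_exp.sub (continuous_P _))).continuousOn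
      · intro y hy
        rw [interior_Iic] at hy
        rw [(hder y).deriv]
        have := ih y hy
        have : (-1 : ℝ) ^ (n + 1) * (Real.exp y - P n y)
            = -((-1 : ℝ) ^ n * (Real.exp y - P n y)) := by ring
        rw [this]
        linarith [ih y hy]
    have h0 : (fun z => (-1 : ℝ) ^ (n + 1) * (Real.exp z - P (n + 1) z)) 0 = 0 := by
      have : P (n + 1) 0 = 1 := by
        rw [P, Finset.sum_range_succ']
        simp
      simp [this]
    have := hanti (Set.mem_Iic.mpr hx.le) (Set.mem_Iic.mpr le_rfl) hx
    rw [h0] at this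
    exact this

/-- Sign of g_ℓ(x) = x(e^x - P ℓ x) - (e^x - P (ℓ+1) x) for x < 0, ℓ ≥ 1. -/
lemma sign_g (ℓ : ℕ) (hℓ : 1 ≤ ℓ) : ∀ x : ℝ, x < 0 →
    0 < (-1 : ℝ) ^ (ℓ + 1) * (x * (Real.exp x - P ℓ x) - (Real.exp x - P (ℓ + 1) x)) := by
  obtain ⟨m, rfl⟩ := Nat.exists_eq_add_of_le hℓ
  set n := 1 + m with hn
  intro x hx
  have hder : ∀ y : ℝ, HasDerivAt
      (fun z => (-1 : ℝ) ^ (n + 1) * (z * (Real.exp z - P n z) - (Real.exp z - P (n + 1) z)))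
      ((-1 : ℝ) ^ (n + 1) * (y * (Real.exp y - P (m) y))) y := by
    intro y
    have h1 : HasDerivAt (fun z : ℝ => z * (Real.exp z - P n z))
        (1 * (Real.exp y - P n y) + y * (Real.exp y - P m y)) y := by
      have : n = m + 1 := by omega
      rw [this]
      exact (hasDerivAt_id y).mul ((Real.hasDerivAt_exp y).sub (hasDerivAt_P m y))
    have h2 : HasDerivAt (fun z : ℝ => Real.exp z - P (n + 1) z)
        (Real.exp y - P n y) y := (Real.hasDerivAt_exp y).sub (hasDerivAt_P n y)
    have := (h1.sub h2).const_mul ((-1 : ℝ) ^ (n + 1))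
    exact this.congr_deriv (by ring)
  have hanti : StrictAntiOn
      (fun z => (-1 : ℝ) ^ (n + 1) * (z * (Real.exp z - P n z) - (Real.exp z - P (n + 1) z)))
      (Set.Iic (0 : ℝ)) := by
    apply strictAntiOn_of_deriv_neg (convex_Iic 0)
    · exact (continuous_const.mul ((continuous_id.mul (Real.continuous_exp.sub
        (continuous_P _))).sub (Real.continuous_exp.sub (continuous_P _)))).continuousOn
    · intro y hy
      rw [interior_Iic, Set.mem_Iio] at hy
      rw [(hder y).deriv]
      have hrem := sign_remainder m y hy
      have hsgn : (-1 : ℝ) ^ (n + 1) * (y * (Real.exp y - P m y))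
          = -((-y) * ((-1 : ℝ) ^ m * (Real.exp y - P m y))) := by
        have : n = m + 1 := by omega
        rw [this]
        ring
      rw [hsgn]
      have : 0 < (-y) * ((-1 : ℝ) ^ m * (Real.exp y - P m y)) :=
        mul_pos (by linarith) hrem
      linarith
  have h0 : (fun z => (-1 : ℝ) ^ (n + 1) * (z * (Real.exp z - P n z) - (Real.exp z - P (n + 1) z))) 0 = 0 := by
    have hP1 : P (n + 1) 0 = 1 := by
      rw [P, Finset.sum_range_succ']
      simp
    simp [hP1]
  have := hanti (Set.mem_Iic.mpr hx.le) (Set.mem_Iic.mpr le_rfl) hx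
  rw [h0] at this
  exact this

lemma phiR_pos (ℓ : ℕ) (x : ℝ) : 0 < phiR ℓ x := by
  rcases le_or_gt 0 x with hx | hx
  · rw [phiR]
    apply Summable.tsum_pos (summable ℓ x) (fun k => by positivity) 0
    simp
    positivity
  · have hid := exp_eq ℓ x
    have hrem := sign_remainder ℓ x hx
    have hx' : Real.exp x - P ℓ x = x ^ ℓ * phiR ℓ x := by linarith
    rw [hx'] at hrem
    have hpow : (0 : ℝ) < (-1 : ℝ) ^ ℓ * x ^ ℓ := by
      rw [← neg_pow]
      exact pow_pos (by linarith) ℓ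
    nlinarith

lemma phiR_succ_lt (ℓ : ℕ) (hℓ : 1 ≤ ℓ) (x : ℝ) : phiR (ℓ + 1) x < phiR ℓ x := by
  rcases lt_trichotomy x 0 with hx | hx | hx
  · have hg := sign_g ℓ hℓ x hx
    have h1 := exp_eq ℓ x
    have h2 := exp_eq (ℓ + 1) x
    have key : x * (Real.exp x - P ℓ x) - (Real.exp x - P (ℓ + 1) x)
        = x ^ (ℓ + 1) * (phiR ℓ x - phiR (ℓ + 1) x) := by
      have e1 : Real.exp x - P ℓ x = x ^ ℓ * phiR ℓ x := by linarith
      have e2 : Real.exp x - P (ℓ + 1) x = x ^ (ℓ + 1) * phiR (ℓ + 1) x := by linarith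
      rw [e1, e2, pow_succ]
      ring
    rw [key] at hg
    have hpow : (0 : ℝ) < (-1 : ℝ) ^ (ℓ + 1) * x ^ (ℓ + 1) := by
      rw [← neg_pow]
      exact pow_pos (by linarith) (ℓ + 1)
    nlinarith
  · subst hx
    have h : ∀ m : ℕ, phiR m 0 = 1 / (Nat.factorial m : ℝ) := by
      intro m
      rw [phiR, tsum_eq_single 0 (fun k hk => by simp [zero_pow hk])]
      simp
    rw [h, h]
    apply div_lt_div_of_pos_left one_pos (by exact_mod_cast Nat.factorial_pos ℓ)
    exact_mod_cast (Nat.factorial_lt (by omega)).mpr (by omega)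
  · rw [phiR, phiR]
    refine Summable.tsum_lt_tsum (i := 0) (fun k => ?_) ?_ (summable (ℓ+1) x) (summable ℓ x)
    · exact div_le_div_of_nonneg_left (pow_pos hx k).le
        (by positivity)
        (by exact_mod_cast Nat.factorial_le (by omega : k + ℓ ≤ k + (ℓ + 1)))
    · simp only [pow_zero, zero_add]
      exact div_lt_div_of_pos_left one_pos (by exact_mod_cast Nat.factorial_pos ℓ)
        (by exact_mod_cast (Nat.factorial_lt (by omega)).mpr (by omega))

end PhiAux

theorem phiR_ratio_bound (ℓ : ℕ) (hℓ : 1 ≤ ℓ) (x : ℝ) :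
    0 < 1 - phiR (ℓ + 1) x / phiR ℓ x ∧ 1 - phiR (ℓ + 1) x / phiR ℓ x < 1 := by
  have h1 := PhiAux.phiR_pos ℓ x
  have h2 := PhiAux.phiR_pos (ℓ + 1) x
  have h3 := PhiAux.phiR_succ_lt ℓ hℓ x
  constructor
  · have : phiR (ℓ + 1) x / phiR ℓ x < 1 := (div_lt_one h1).mpr h3
    linarith
  · have : 0 < phiR (ℓ + 1) x / phiR ℓ x := div_pos h2 h1
    linarith
end

section
/- Let ℓ ≥ 1 and let z = a + ib be a complex number with b ∈ [-π/2, π/2]. Then the real part of φ_ℓ(z) is strictly positive; in particular φ_ℓ(z) ≠ 0. -/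
noncomputable def phi (ℓ : ℕ) (z : ℂ) : ℂ :=
  ∑' k : ℕ, z ^ k / (Nat.factorial (k + ℓ) : ℂ)

open MeasureTheory Set intervalIntegral

private lemma fact_prod (k n : ℕ) :
    (k.factorial : ℕ) * ∏ j ∈ Finset.range (n + 1), (k + 1 + j) = (k + n + 1).factorial := by
  induction n with
  | zero => simp [Nat.factorial_succ, mul_comm]
  | succ n ih =>
      rw [Finset.prod_range_succ, ← mul_assoc, ih]
      have : k + (n + 1) + 1 = (k + n + 1) + 1 := by ring
      rw [this, Nat.factorial_succ, mul_comm]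
      congr 1
      omega

private lemma betaNat (k n : ℕ) :
    ∫ x in (0:ℝ)..1, (x : ℂ) ^ k * (1 - (x : ℂ)) ^ n
      = (k.factorial * n.factorial : ℂ) / ((k + n + 1).factorial : ℂ) := by
  have h := Complex.betaIntegral_eval_nat_add_one_right (u := (k : ℂ) + 1) (by simp; positivity) n
  rw [Complex.betaIntegral] at h
  have h1 : ((k : ℂ) + 1 - 1) = ((k : ℕ) : ℂ) := by ring
  have h2 : (((n : ℂ)) + 1 - 1) = ((n : ℕ) : ℂ) := by ring
  rw [h1, h2] at h
  simp_rw [Complex.cpow_natCast] at h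
  rw [h]
  have hp : (∏ j ∈ Finset.range (n + 1), ((k : ℂ) + 1 + j))
      = ((k + n + 1).factorial : ℂ) / (k.factorial : ℂ) := by
    have hc := congrArg (Nat.cast : ℕ → ℂ) (fact_prod k n)
    push_cast at hc
    have hk : (k.factorial : ℂ) ≠ 0 := by exact_mod_cast k.factorial_ne_zero
    rw [eq_div_iff hk]
    linear_combination hc
  rw [hp]
  have hk : (k.factorial : ℂ) ≠ 0 := by exact_mod_cast k.factorial_ne_zero
  have hkn : ((k + n + 1).factorial : ℂ) ≠ 0 := by exact_mod_cast (k + n + 1).factorial_ne_zero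
  field_simp

private lemma exp_tsum_div (w : ℂ) : Complex.exp w = ∑' k : ℕ, w ^ k / (k.factorial : ℂ) := by
  rw [Complex.exp_eq_exp_ℂ, NormedSpace.exp_eq_tsum_div]

private lemma phi_eq_integral (n : ℕ) (z : ℂ) :
    ((n.factorial : ℝ) : ℂ) * phi (n + 1) z
      = ∫ τ in (0:ℝ)..1, Complex.exp (τ * z) * (1 - (τ:ℂ)) ^ n := by
  set μ : Measure ℝ := volume.restrict (Ioc (0:ℝ) 1) with hμ
  set F : ℕ → ℝ → ℂ := fun k τ => (z ^ k / (k.factorial : ℂ)) • ((τ:ℂ) ^ k * (1 - (τ:ℂ)) ^ n)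
    with hF
  have hFcont : ∀ k, Continuous (F k) := by
    intro k
    refine Continuous.const_smul (g := fun τ : ℝ => (τ:ℂ) ^ k * (1 - (τ:ℂ)) ^ n) ?_ (z ^ k / (k.factorial : ℂ))
    fun_prop
  have hFint : ∀ k, Integrable (F k) μ := fun k => (hFcont k).integrableOn_Ioc
  have hbound : ∀ k, ∀ τ ∈ Ioc (0:ℝ) 1, ‖F k τ‖ ≤ ‖z‖ ^ k / k.factorial := by
    intro k τ hτ
    have h0 : (0:ℝ) ≤ τ := le_of_lt hτ.1
    have h1 : τ ≤ 1 := hτ.2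
    have e1 : ‖(τ:ℂ) ^ k‖ ≤ 1 := by
      rw [norm_pow, Complex.norm_real]
      exact pow_le_one₀ (norm_nonneg _) (by rw [Real.norm_eq_abs, abs_of_nonneg h0]; exact h1)
    have e2 : ‖(1 - (τ:ℂ)) ^ n‖ ≤ 1 := by
      have : (1 - (τ:ℂ)) = ((1 - τ : ℝ) : ℂ) := by push_cast; ring
      rw [this, norm_pow, Complex.norm_real]
      exact pow_le_one₀ (norm_nonneg _)
        (by rw [Real.norm_eq_abs, abs_of_nonneg (by linarith)]; linarith)
    have e3 : ‖z ^ k / (k.factorial : ℂ)‖ = ‖z‖ ^ k / k.factorial := by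
      rw [norm_div, norm_pow, Complex.norm_natCast]
    calc ‖F k τ‖ = ‖z ^ k / (k.factorial : ℂ)‖ * ‖(τ:ℂ) ^ k * (1 - (τ:ℂ)) ^ n‖ := norm_smul _ _
      _ ≤ ‖z ^ k / (k.factorial : ℂ)‖ * 1 := by
          apply mul_le_mul_of_nonneg_left _ (norm_nonneg _)
          rw [norm_mul]
          calc ‖(τ:ℂ) ^ k‖ * ‖(1 - (τ:ℂ)) ^ n‖ ≤ 1 * 1 :=
                mul_le_mul e1 e2 (norm_nonneg _) zero_le_one
            _ = 1 := one_mul 1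
      _ = ‖z‖ ^ k / k.factorial := by rw [e3, mul_one]
  have hμfin : μ univ = 1 := by
    rw [hμ, Measure.restrict_apply_univ, Real.volume_Ioc]
    norm_num
  have hnormint : ∀ k, ∫ τ, ‖F k τ‖ ∂μ ≤ ‖z‖ ^ k / k.factorial := by
    intro k
    have hfm : ∀ᵐ τ ∂μ, ‖F k τ‖ ≤ ‖z‖ ^ k / k.factorial := by
      rw [hμ, ae_restrict_iff' measurableSet_Ioc]
      exact Filter.Eventually.of_forall (hbound k)
    haveI : IsFiniteMeasure μ := ⟨by rw [hμfin]; exact ENNReal.one_lt_top⟩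
    have := MeasureTheory.integral_mono_of_nonneg
      (Filter.Eventually.of_forall fun τ => norm_nonneg (F k τ))
      (integrable_const (μ := μ) (‖z‖ ^ k / k.factorial)) ?_
    · calc ∫ τ, ‖F k τ‖ ∂μ ≤ ∫ _τ, ‖z‖ ^ k / k.factorial ∂μ := this
        _ = ‖z‖ ^ k / k.factorial := by
            rw [MeasureTheory.integral_const, measureReal_def, hμfin]; simp
    · exact hfm
  have hsum : Summable fun k => ∫ τ, ‖F k τ‖ ∂μ := by
    apply Summable.of_nonneg_of_le
      (fun k => integral_nonneg fun τ => norm_nonneg _) hnormint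
    exact Real.summable_pow_div_factorial ‖z‖
  have key := MeasureTheory.integral_tsum_of_summable_integral_norm hFint hsum
  have hptwise : ∀ τ : ℝ, (∑' k, F k τ) = Complex.exp (τ * z) * (1 - (τ:ℂ)) ^ n := by
    intro τ
    have : ∀ k : ℕ, F k τ = ((τ * z) ^ k / (k.factorial : ℂ)) * (1 - (τ:ℂ)) ^ n := by
      intro k; simp only [hF, smul_eq_mul, mul_pow]; ring
    rw [tsum_congr this, tsum_mul_right, ← exp_tsum_div]
  have hFval : ∀ k, ∫ τ, F k τ ∂μ
      = ((n.factorial : ℝ) : ℂ) * (z ^ k / ((k + (n + 1)).factorial : ℂ)) := by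
    intro k
    rw [hμ, ← intervalIntegral.integral_of_le (zero_le_one)]
    simp only [hF]
    rw [intervalIntegral.integral_smul, betaNat k n]
    have hk : (k.factorial : ℂ) ≠ 0 := by exact_mod_cast k.factorial_ne_zero
    have hkn : ((k + n + 1).factorial : ℂ) ≠ 0 := by exact_mod_cast (k + n + 1).factorial_ne_zero
    have : k + (n + 1) = k + n + 1 := by ring
    rw [this]
    push_cast
    field_simp
    ring_nf
    rw [show 1 + k + n = k + n + 1 by ring]
    field_simp
  calc ((n.factorial : ℝ) : ℂ) * phi (n + 1) z
      = ∑' k, ((n.factorial : ℝ) : ℂ) * (z ^ k / ((k + (n + 1)).factorial : ℂ)) := by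
        rw [phi, tsum_mul_left]
    _ = ∑' k, ∫ τ, F k τ ∂μ := by rw [tsum_congr hFval]
    _ = ∫ τ, (∑' k, F k τ) ∂μ := key
    _ = ∫ τ, Complex.exp (τ * z) * (1 - (τ:ℂ)) ^ n ∂μ := by
        exact MeasureTheory.integral_congr_ae (Filter.Eventually.of_forall hptwise)
    _ = ∫ τ in (0:ℝ)..1, Complex.exp (τ * z) * (1 - (τ:ℂ)) ^ n := by
        rw [hμ, ← intervalIntegral.integral_of_le (zero_le_one)]

theorem phi_re_pos_on_strip (ℓ : ℕ) (hℓ : 1 ≤ ℓ) (z : ℂ)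
    (hz : z.im ∈ Set.Icc (-(Real.pi / 2)) (Real.pi / 2)) :
    0 < (phi ℓ z).re ∧ phi ℓ z ≠ 0 := by
  obtain ⟨n, rfl⟩ : ∃ n, ℓ = n + 1 := ⟨ℓ - 1, (Nat.succ_pred_eq_of_pos hℓ).symm⟩
  have hI := phi_eq_integral n z
  set g : ℝ → ℝ := fun τ => Real.exp (τ * z.re) * Real.cos (τ * z.im) * (1 - τ) ^ n with hg
  have hgcont : Continuous g := by fun_prop
  have hcont : Continuous fun τ : ℝ => Complex.exp (τ * z) * (1 - (τ:ℂ)) ^ n := by fun_prop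
  have hre : (∫ τ in (0:ℝ)..1, Complex.exp (τ * z) * (1 - (τ:ℂ)) ^ n).re
      = ∫ τ in (0:ℝ)..1, g τ := by
    have hri := integral_re (𝕜 := ℂ) (μ := volume.restrict (Ioc (0:ℝ) 1))
      (hcont.integrableOn_Ioc)
    simp only [RCLike.re_to_complex] at hri
    rw [intervalIntegral.integral_of_le zero_le_one,
      intervalIntegral.integral_of_le zero_le_one, ← hri]
    apply MeasureTheory.integral_congr_ae
    apply Filter.Eventually.of_forall
    intro τ
    show (Complex.exp (↑τ * z) * (1 - (τ:ℂ)) ^ n).re = g τ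
    have h1 : (1 - (τ:ℂ)) ^ n = (((1 - τ : ℝ) ^ n : ℝ) : ℂ) := by push_cast; ring
    rw [h1]
    rw [Complex.mul_re]
    simp only [Complex.ofReal_re, Complex.ofReal_im, mul_zero, sub_zero, Complex.exp_re,
      Complex.re_ofReal_mul, Complex.im_ofReal_mul, hg]
  have hpos : 0 < ∫ τ in (0:ℝ)..1, g τ := by
    apply intervalIntegral.intervalIntegral_pos_of_pos_on (hgcont.intervalIntegrable 0 1)
    · intro τ hτ
      have h0 : 0 < τ := hτ.1
      have h1 : τ < 1 := hτ.2
      have hpi : 0 < Real.pi / 2 := by positivity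
      have habs : |τ * z.im| < Real.pi / 2 := by
        rw [abs_mul, abs_of_pos h0]
        have : |z.im| ≤ Real.pi / 2 := abs_le.mpr ⟨hz.1, hz.2⟩
        nlinarith [abs_nonneg z.im]
      have hcos : 0 < Real.cos (τ * z.im) :=
        Real.cos_pos_of_mem_Ioo ⟨by linarith [abs_lt.mp habs |>.1], (abs_lt.mp habs).2⟩
      have : (0:ℝ) < (1 - τ) ^ n := pow_pos (by linarith) n
      positivity
    · exact zero_lt_one
  have hre2 : ((((n.factorial : ℝ)) : ℂ) * phi (n + 1) z).re
      = (n.factorial : ℝ) * (phi (n + 1) z).re := Complex.re_ofReal_mul _ _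
  have hfac : (0:ℝ) < n.factorial := by exact_mod_cast n.factorial_pos
  have hmain : 0 < (phi (n + 1) z).re := by
    have h3 := congrArg Complex.re hI
    rw [hre2, hre] at h3
    nlinarith
  refine ⟨hmain, fun h => ?_⟩
  rw [h] at hmain
  simp at hmain
end

section
/- Let ℓ ≥ 1 and let z be a complex number with imaginary part in [-π/2, π/2]. Then |1 - φ_{ℓ+1}(z)/φ_ℓ(z)| < 1. -/
open intervalIntegral Real

lemma summable_phi (n : ℕ) (z : ℂ) :
    Summable (fun k : ℕ => z ^ k / (Nat.factorial (k + n) : ℂ)) := by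
  apply Summable.of_norm_bounded (Real.summable_pow_div_factorial ‖z‖)
  intro k
  rw [norm_div, norm_pow]
  have h1 : ‖((Nat.factorial (k + n) : ℂ))‖ = (Nat.factorial (k + n) : ℝ) := by
    simp
  rw [h1]
  gcongr
  exact Nat.le_add_right k n

lemma phi_zero (z : ℂ) : phi 0 z = Complex.exp z := by
  rw [Complex.exp_eq_exp_ℂ, NormedSpace.exp_eq_tsum_div]
  unfold phi
  simp

lemma phi_rec (n : ℕ) (z : ℂ) :
    z * phi (n + 1) z = phi n z - 1 / (Nat.factorial n : ℂ) := by
  have hs := summable_phi n z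
  have h0 := hs.tsum_eq_zero_add
  unfold phi
  rw [← tsum_mul_left]
  have he : (fun k : ℕ => z * (z ^ k / (Nat.factorial (k + (n + 1)) : ℂ)))
      = fun k : ℕ => z ^ (k + 1) / (Nat.factorial ((k + 1) + n) : ℂ) := by
    funext k
    rw [pow_succ]
    have : k + (n + 1) = (k + 1) + n := by omega
    rw [this]; ring
  rw [he]
  have := h0
  simp only [pow_zero, Nat.zero_add] at this
  -- this : ∑' k, z ^ k / (k+n)! = 1 / (0+n)! + ∑' k, z ^ (k+1) / ((k+1)+n)!
  rw [eq_comm, sub_eq_iff_eq_add, eq_comm]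
  rw [this]
  simp [add_comm]

lemma phi_at_zero (n : ℕ) : phi n 0 = 1 / (Nat.factorial n : ℂ) := by
  unfold phi
  rw [tsum_eq_single 0]
  · simp
  · intro k hk; simp [zero_pow hk]

noncomputable def J (n : ℕ) (z : ℂ) : ℂ :=
  ∫ s in (0:ℝ)..1, Complex.exp (z * s) * (1 - (s:ℂ)) ^ n / (Nat.factorial n : ℂ)

lemma contJ (n : ℕ) (z : ℂ) :
    Continuous (fun s : ℝ => Complex.exp (z * s) * (1 - (s:ℂ)) ^ n / (Nat.factorial n : ℂ)) := by
  apply Continuous.div_const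
  exact (Complex.continuous_exp.comp (continuous_const.mul Complex.continuous_ofReal)).mul
    ((continuous_const.sub Complex.continuous_ofReal).pow n)

-- derivative of s ↦ exp (z * s) / z
lemma hasDeriv_expz (z : ℂ) (hz : z ≠ 0) (s : ℝ) :
    HasDerivAt (fun t : ℝ => Complex.exp (z * t) / z) (Complex.exp (z * s)) s := by
  have h1 : HasDerivAt (fun w : ℂ => Complex.exp (z * w) / z) (Complex.exp (z * s)) (s : ℂ) := by
    have h2 : HasDerivAt (fun w : ℂ => z * w) z (s : ℂ) := by
      simpa using (hasDerivAt_id ((s:ℂ))).const_mul z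
    have := (h2.cexp).div_const z
    simpa [mul_comm, mul_div_assoc, mul_div_cancel_left₀ _ hz] using this
  exact h1.comp_ofReal

lemma hasDeriv_weight (n : ℕ) (s : ℝ) :
    HasDerivAt (fun t : ℝ => (1 - (t:ℂ)) ^ (n+1) / (Nat.factorial (n+1) : ℂ))
      (-((1 - (s:ℂ)) ^ n / (Nat.factorial n : ℂ))) s := by
  have h1 : HasDerivAt (fun w : ℂ => (1 - w) ^ (n+1) / (Nat.factorial (n+1) : ℂ))
      (-((1 - (s:ℂ)) ^ n / (Nat.factorial n : ℂ))) ((s:ℂ)) := by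
    have h2 : HasDerivAt (fun w : ℂ => 1 - w) (-1) ((s:ℂ)) := by
      simpa using (hasDerivAt_id ((s:ℂ))).const_sub 1
    have := (h2.pow (n+1)).div_const ((Nat.factorial (n+1) : ℂ))
    have hfac : ((Nat.factorial (n+1) : ℂ)) = (n+1 : ℂ) * (Nat.factorial n : ℂ) := by
      push_cast [Nat.factorial_succ]; ring
    have hne : ((n:ℂ) + 1) ≠ 0 := Nat.cast_add_one_ne_zero n
    have hfacn : (Nat.factorial n : ℂ) ≠ 0 := by exact_mod_cast Nat.factorial_ne_zero n
    refine this.congr_deriv ?_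
    rw [hfac]
    simp only [Nat.add_sub_cancel, Nat.cast_add, Nat.cast_one]
    field_simp
  exact h1.comp_ofReal

lemma intblJ (n : ℕ) (z : ℂ) :
    IntervalIntegrable (fun s : ℝ => Complex.exp (z * s) * (1 - (s:ℂ)) ^ n / (Nat.factorial n : ℂ))
      MeasureTheory.volume 0 1 := (contJ n z).intervalIntegrable 0 1

lemma phi_eq_J (n : ℕ) (z : ℂ) : phi (n + 1) z = J n z := by
  induction n with
  | zero =>
    by_cases hz : z = 0
    · subst hz
      rw [phi_at_zero]
      unfold J
      simp
    · have hrec := phi_rec 0 z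
      rw [phi_zero] at hrec
      have hftc : (∫ s in (0:ℝ)..1, Complex.exp (z * s))
          = Complex.exp (z * 1) / z - Complex.exp (z * 0) / z := by
        apply intervalIntegral.integral_eq_sub_of_hasDerivAt
          (fun s _ => hasDeriv_expz z hz s)
        exact (Complex.continuous_exp.comp
          (continuous_const.mul Complex.continuous_ofReal)).intervalIntegrable 0 1
      have hJ : J 0 z = (Complex.exp z - 1) / z := by
        unfold J
        simp only [pow_zero, Nat.factorial_zero, Nat.cast_one, mul_one, div_one]
        rw [hftc]
        rw [mul_one, mul_zero, Complex.exp_zero, sub_div]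
      rw [hJ]
      field_simp at hrec ⊢
      linear_combination hrec
  | succ n ih =>
    by_cases hz : z = 0
    · subst hz
      rw [phi_at_zero]
      have hftc : (∫ s in (0:ℝ)..1, -(-((1 - (s:ℂ)) ^ (n+1) / (Nat.factorial (n+1) : ℂ))))
          = -((1 - (1:ℝ))^(n+2) / (Nat.factorial (n+2) : ℂ))
            - -((1 - (0:ℝ))^(n+2) / (Nat.factorial (n+2) : ℂ)) := by
        apply intervalIntegral.integral_eq_sub_of_hasDerivAt
          (f := fun t : ℝ => -((1 - (t:ℂ)) ^ (n+2) / (Nat.factorial (n+2) : ℂ)))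
        · intro s _
          exact (hasDeriv_weight (n+1) s).neg
        · apply Continuous.intervalIntegrable
          exact (((continuous_const.sub Complex.continuous_ofReal).pow (n+1)).div_const _).neg.neg
      simp only [neg_neg] at hftc
      unfold J
      rw [show (fun s : ℝ => Complex.exp ((0:ℂ) * s) * (1 - (s:ℂ)) ^ (n+1) / (Nat.factorial (n+1) : ℂ))
          = fun s : ℝ => (1 - (s:ℂ)) ^ (n+1) / (Nat.factorial (n+1) : ℂ) from by
        funext s; simp]
      rw [hftc]
      norm_num
    · have hrec := phi_rec (n+1) z
      have hu : ∀ s ∈ Set.uIcc (0:ℝ) 1, HasDerivAt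
          (fun t : ℝ => (1 - (t:ℂ)) ^ (n+1) / (Nat.factorial (n+1) : ℂ))
          (-((1 - (s:ℂ)) ^ n / (Nat.factorial n : ℂ))) s := fun s _ => hasDeriv_weight n s
      have hv : ∀ s ∈ Set.uIcc (0:ℝ) 1, HasDerivAt
          (fun t : ℝ => Complex.exp (z * t) / z) (Complex.exp (z * s)) s :=
        fun s _ => hasDeriv_expz z hz s
      have hu' : IntervalIntegrable (fun s : ℝ => -((1 - (s:ℂ)) ^ n / (Nat.factorial n : ℂ)))
          MeasureTheory.volume 0 1 := by
        apply Continuous.intervalIntegrable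
        exact (((continuous_const.sub Complex.continuous_ofReal).pow n).div_const _).neg
      have hv' : IntervalIntegrable (fun s : ℝ => Complex.exp (z * s))
          MeasureTheory.volume 0 1 := by
        apply Continuous.intervalIntegrable
        exact Complex.continuous_exp.comp (continuous_const.mul Complex.continuous_ofReal)
      have hibp := intervalIntegral.integral_mul_deriv_eq_deriv_mul hu hv hu' hv'
      have hL : (∫ s in (0:ℝ)..1,
            ((1 - (s:ℂ)) ^ (n+1) / (Nat.factorial (n+1) : ℂ)) * Complex.exp (z * s))
          = J (n+1) z := by
        unfold J
        apply intervalIntegral.integral_congr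
        intro s _
        ring
      have hR : (∫ s in (0:ℝ)..1,
            (-((1 - (s:ℂ)) ^ n / (Nat.factorial n : ℂ))) * (Complex.exp (z * s) / z))
          = (-(1/z)) * J n z := by
        unfold J
        rw [← intervalIntegral.integral_const_mul]
        apply intervalIntegral.integral_congr
        intro s _
        field_simp
      rw [hL, hR] at hibp
      have hJs : J (n+1) z = (J n z - 1/((Nat.factorial (n+1)) : ℂ))/z := by
        rw [hibp]
        push_cast
        norm_num [Complex.exp_zero]
        field_simp
        ring_nf
      have hps : phi (n+1+1) z = (phi (n+1) z - 1/((Nat.factorial (n+1)) : ℂ))/z := by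
        rw [eq_div_iff hz]
        linear_combination hrec
      rw [hps, hJs, ih]

lemma J_re (n : ℕ) (z : ℂ) : (J n z).re
    = ∫ s in (0:ℝ)..1, Real.exp (z.re * s) * Real.cos (z.im * s) * ((1-s)^n / (Nat.factorial n : ℝ)) := by
  have h := Complex.reCLM.intervalIntegral_comp_comm (intblJ n z)
  simp only [Complex.reCLM_apply] at h
  unfold J
  rw [← h]
  apply intervalIntegral.integral_congr
  intro s _
  have he : Complex.exp (z * s) * (1 - (s:ℂ))^n / (Nat.factorial n : ℂ)
      = Complex.exp (z * s) * ((((1-s)^n / (Nat.factorial n : ℝ)) : ℝ) : ℂ) := by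
    push_cast; ring
  simp only [he, Complex.mul_re, Complex.ofReal_re, Complex.ofReal_im,
    Complex.exp_re, Complex.exp_im, Complex.mul_im, Complex.mul_re, mul_zero, sub_zero]
  simp [Complex.mul_re]

lemma J_im (n : ℕ) (z : ℂ) : (J n z).im
    = ∫ s in (0:ℝ)..1, Real.exp (z.re * s) * Real.sin (z.im * s) * ((1-s)^n / (Nat.factorial n : ℝ)) := by
  have h := Complex.imCLM.intervalIntegral_comp_comm (intblJ n z)
  simp only [Complex.imCLM_apply] at h
  unfold J
  rw [← h]
  apply intervalIntegral.integral_congr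
  intro s _
  have he : Complex.exp (z * s) * (1 - (s:ℂ))^n / (Nat.factorial n : ℂ)
      = Complex.exp (z * s) * ((((1-s)^n / (Nat.factorial n : ℝ)) : ℝ) : ℂ) := by
    push_cast; ring
  simp only [he, Complex.mul_im, Complex.ofReal_re, Complex.ofReal_im,
    Complex.exp_re, Complex.exp_im, mul_zero, zero_add]
  simp [Complex.mul_im]

lemma int_cos_pos (x y : ℝ) (hy : |y| ≤ Real.pi / 2) (w : ℝ → ℝ) (hc : Continuous w)
    (hpos : ∀ s ∈ Set.Ioo (0:ℝ) 1, 0 < w s) :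
    0 < ∫ s in (0:ℝ)..1, Real.exp (x * s) * Real.cos (y * s) * w s := by
  apply intervalIntegral.intervalIntegral_pos_of_pos_on
  · apply Continuous.intervalIntegrable
    exact ((Real.continuous_exp.comp (continuous_const.mul continuous_id)).mul
      (Real.continuous_cos.comp (continuous_const.mul continuous_id))).mul hc
  · intro s hs
    obtain ⟨hs0, hs1⟩ := hs
    have habs : |y * s| < Real.pi / 2 := by
      rw [abs_mul, abs_of_pos hs0]
      calc |y| * s ≤ (Real.pi / 2) * s := by
            apply mul_le_mul_of_nonneg_right hy hs0.le
        _ < Real.pi / 2 := by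
            nlinarith [Real.pi_pos]
    have hcos : 0 < Real.cos (y * s) := by
      apply Real.cos_pos_of_mem_Ioo
      constructor
      · linarith [abs_lt.mp habs |>.1]
      · exact (abs_lt.mp habs).2
    exact mul_pos (mul_pos (Real.exp_pos _) hcos) (hpos s ⟨hs0, hs1⟩)
  · norm_num

lemma int_sin_nonneg (x y : ℝ) (hy0 : 0 ≤ y) (hy : y ≤ Real.pi / 2) (w : ℝ → ℝ)
    (hw : ∀ s ∈ Set.Icc (0:ℝ) 1, 0 ≤ w s) :
    0 ≤ ∫ s in (0:ℝ)..1, Real.exp (x * s) * Real.sin (y * s) * w s := by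
  apply intervalIntegral.integral_nonneg (by norm_num)
  intro s hs
  obtain ⟨hs0, hs1⟩ := hs
  have hsin : 0 ≤ Real.sin (y * s) := by
    apply Real.sin_nonneg_of_nonneg_of_le_pi (mul_nonneg hy0 hs0)
    nlinarith [Real.pi_pos]
  exact mul_nonneg (mul_nonneg (Real.exp_pos _).le hsin) (hw s ⟨hs0, hs1⟩)

lemma int_sin_nonpos (x y : ℝ) (hy0 : y ≤ 0) (hy : -(Real.pi / 2) ≤ y) (w : ℝ → ℝ)
    (hw : ∀ s ∈ Set.Icc (0:ℝ) 1, 0 ≤ w s) :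
    (∫ s in (0:ℝ)..1, Real.exp (x * s) * Real.sin (y * s) * w s) ≤ 0 := by
  have h := int_sin_nonneg x (-y) (by linarith) (by linarith) w hw
  have heq : (∫ s in (0:ℝ)..1, Real.exp (x * s) * Real.sin (-y * s) * w s)
      = -∫ s in (0:ℝ)..1, Real.exp (x * s) * Real.sin (y * s) * w s := by
    rw [← intervalIntegral.integral_neg]
    apply intervalIntegral.integral_congr
    intro s _
    simp only [neg_mul, Real.sin_neg]
    ring
  rw [heq] at h
  linarith

theorem phi_ratio_abs_lt_one (ℓ : ℕ) (hℓ : 1 ≤ ℓ) (z : ℂ)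
    (hz : z.im ∈ Set.Icc (-(Real.pi / 2)) (Real.pi / 2)) :
    ‖1 - phi (ℓ + 1) z / phi ℓ z‖ < 1 := by
  obtain ⟨m, rfl⟩ : ∃ m, ℓ = m + 1 := ⟨ℓ - 1, by omega⟩
  obtain ⟨hy1, hy2⟩ := hz
  have hyabs : |z.im| ≤ Real.pi / 2 := abs_le.mpr ⟨hy1, hy2⟩
  set x := z.re with hx
  set y := z.im with hyd
  -- weights
  set W : ℕ → ℝ → ℝ := fun n s => (1-s)^n / (Nat.factorial n : ℝ) with hW
  have hWc : ∀ n : ℕ, Continuous (W n) :=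
    fun n => ((continuous_const.sub continuous_id).pow n).div_const _
  have hWpos : ∀ n : ℕ, ∀ s ∈ Set.Ioo (0:ℝ) 1, 0 < W n s := by
    intro n s hs
    have : (0:ℝ) < 1 - s := by linarith [hs.2]
    positivity
  have hWnonneg : ∀ n : ℕ, ∀ s ∈ Set.Icc (0:ℝ) 1, 0 ≤ W n s := by
    intro n s hs
    have : (0:ℝ) ≤ 1 - s := by linarith [hs.2]
    positivity
  -- the combined weight h = 2 W m - W (m+1)
  set H : ℝ → ℝ := fun s => 2 * W m s - W (m+1) s with hH
  have hHc : Continuous H := (continuous_const.mul (hWc m)).sub (hWc (m+1))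
  have hHnonneg : ∀ s ∈ Set.Icc (0:ℝ) 1, 0 ≤ H s := by
    intro s hs
    have h01 : (0:ℝ) ≤ 1 - s := by linarith [hs.2]
    have h1 : (1-s)^(m+1) ≤ (1-s)^m := by
      apply pow_le_pow_of_le_one h01 (by linarith [hs.1]) (by omega)
    have h2 : (Nat.factorial m : ℝ) ≤ (Nat.factorial (m+1) : ℝ) := by
      exact_mod_cast Nat.factorial_le (by omega)
    have hfp : (0:ℝ) < (Nat.factorial m : ℝ) := by
      exact_mod_cast Nat.factorial_pos m
    have h3 : (1-s)^(m+1) / (Nat.factorial (m+1) : ℝ) ≤ (1-s)^m / (Nat.factorial m : ℝ) := by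
      apply div_le_div₀ (by positivity) h1 hfp h2
    have h4 : (0:ℝ) ≤ (1-s)^m / (Nat.factorial m : ℝ) := by positivity
    simp only [hH, hW]
    linarith
  have hHpos : ∀ s ∈ Set.Ioo (0:ℝ) 1, 0 < H s := by
    intro s hs
    have h01 : (0:ℝ) ≤ 1 - s := by linarith [hs.2]
    have h1 : (1-s)^(m+1) ≤ (1-s)^m := by
      apply pow_le_pow_of_le_one h01 (by linarith [hs.1]) (by omega)
    have h2 : (Nat.factorial m : ℝ) ≤ (Nat.factorial (m+1) : ℝ) := by
      exact_mod_cast Nat.factorial_le (by omega)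
    have hfp : (0:ℝ) < (Nat.factorial m : ℝ) := by
      exact_mod_cast Nat.factorial_pos m
    have h3 : (1-s)^(m+1) / (Nat.factorial (m+1) : ℝ) ≤ (1-s)^m / (Nat.factorial m : ℝ) := by
      apply div_le_div₀ (by positivity) h1 hfp h2
    have h4 : (0:ℝ) < (1-s)^m / (Nat.factorial m : ℝ) := hWpos m s hs
    simp only [hH, hW]
    linarith
  -- integrability of the trig-weighted integrands
  have hintc : ∀ w : ℝ → ℝ, Continuous w → IntervalIntegrable
      (fun s => Real.exp (x * s) * Real.cos (y * s) * w s) MeasureTheory.volume 0 1 := by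
    intro w hw
    apply Continuous.intervalIntegrable
    exact ((Real.continuous_exp.comp (continuous_const.mul continuous_id)).mul
      (Real.continuous_cos.comp (continuous_const.mul continuous_id))).mul hw
  have hints : ∀ w : ℝ → ℝ, Continuous w → IntervalIntegrable
      (fun s => Real.exp (x * s) * Real.sin (y * s) * w s) MeasureTheory.volume 0 1 := by
    intro w hw
    apply Continuous.intervalIntegrable
    exact ((Real.continuous_exp.comp (continuous_const.mul continuous_id)).mul
      (Real.continuous_sin.comp (continuous_const.mul continuous_id))).mul hw
  -- real and imaginary parts
  have hRA : 0 < (J m z).re := by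
    rw [J_re]
    exact int_cos_pos x y hyabs (W m) (hWc m) (hWpos m)
  have hRB : 0 < (J (m+1) z).re := by
    rw [J_re]
    exact int_cos_pos x y hyabs (W (m+1)) (hWc (m+1)) (hWpos (m+1))
  have h2AB : 0 < 2 * (J m z).re - (J (m+1) z).re := by
    have heq : 2 * (J m z).re - (J (m+1) z).re
        = ∫ s in (0:ℝ)..1, Real.exp (x * s) * Real.cos (y * s) * H s := by
      rw [J_re, J_re, ← intervalIntegral.integral_const_mul,
        ← intervalIntegral.integral_sub
          ((hintc (W m) (hWc m)).const_mul 2) (hintc (W (m+1)) (hWc (m+1)))]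
      apply intervalIntegral.integral_congr
      intro s _
      simp only [hH]
      ring
    rw [heq]
    exact int_cos_pos x y hyabs H hHc hHpos
  have hImProd : 0 ≤ (2 * (J m z).im - (J (m+1) z).im) * (J (m+1) z).im := by
    have heq : 2 * (J m z).im - (J (m+1) z).im
        = ∫ s in (0:ℝ)..1, Real.exp (x * s) * Real.sin (y * s) * H s := by
      rw [J_im, J_im, ← intervalIntegral.integral_const_mul,
        ← intervalIntegral.integral_sub
          ((hints (W m) (hWc m)).const_mul 2) (hints (W (m+1)) (hWc (m+1)))]
      apply intervalIntegral.integral_congr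
      intro s _
      simp only [hH]
      ring
    rw [heq, J_im]
    rcases le_or_gt 0 y with hy0 | hy0
    · exact mul_nonneg (int_sin_nonneg x y hy0 hy2 H hHnonneg)
        (int_sin_nonneg x y hy0 hy2 (W (m+1)) (hWnonneg (m+1)))
    · have h1 := int_sin_nonpos x y hy0.le hy1 H hHnonneg
      have h2 := int_sin_nonpos x y hy0.le hy1 (W (m+1)) (hWnonneg (m+1))
      have := mul_nonneg (neg_nonneg.mpr h1) (neg_nonneg.mpr h2)
      rw [neg_mul_neg] at this
      exact this
  -- endgame
  have hA := phi_eq_J m z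
  have hB := phi_eq_J (m+1) z
  have hAne : phi (m+1) z ≠ 0 := by
    rw [hA]
    intro h
    rw [h] at hRA
    simp at hRA
  rw [show (1 : ℂ) - phi (m+1+1) z / phi (m+1) z
      = (phi (m+1) z - phi (m+1+1) z) / phi (m+1) z from by field_simp]
  rw [norm_div]
  rw [div_lt_one (by
    have := norm_pos_iff.mpr hAne
    exact this)]
  rw [hA, hB]
  rw [Complex.norm_def, Complex.norm_def]
  apply Real.sqrt_lt_sqrt (Complex.normSq_nonneg _)
  simp only [Complex.normSq_apply, Complex.sub_re, Complex.sub_im]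
  nlinarith [mul_pos h2AB hRB, hImProd]
end

section
/- Let B, X_0 ∈ ℂ^{N×N}, b ∈ ℂ^N, and let X_k be the Newton iterates X_{k+1} = 2X_k - X_k B X_k. Then for each k ≥ 1, the vector x_k = X_k b lies in the Krylov subspace span{X_0 b, (X_0 B)X_0 b, ..., (X_0 B)^{2^k - 1} X_0 b}. -/
theorem newton_krylov {N : ℕ} (B X₀ : Matrix (Fin N) (Fin N) ℂ) (b : Fin N → ℂ)
    (X : ℕ → Matrix (Fin N) (Fin N) ℂ) (hX0 : X 0 = X₀)
    (hX : ∀ k, X (k + 1) = 2 • X k - X k * B * X k) :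
    ∀ k ≥ 1, (X k).mulVec b ∈
      Submodule.span ℂ
        ((fun j : ℕ => ((X₀ * B) ^ j).mulVec (X₀.mulVec b)) ''
          {j | j ≤ 2 ^ k - 1}) := by
  set M := X₀ * B with hM
  have key : ∀ k, ∃ p : Polynomial ℂ, p.natDegree ≤ 2 ^ k - 1 ∧
      X k = Polynomial.aeval M p * X₀ := by
    intro k
    induction k with
    | zero => exact ⟨1, by simp, by simp [hX0]⟩
    | succ k ih =>
      obtain ⟨p, hdeg, hp⟩ := ih
      refine ⟨Polynomial.C 2 * p - p * Polynomial.X * p, ?_, ?_⟩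
      · have h1 : (Polynomial.C (2:ℂ) * p).natDegree ≤ 2 ^ (k+1) - 1 := by
          refine le_trans (Polynomial.natDegree_C_mul_le _ _) ?_
          have : (1:ℕ) ≤ 2 ^ k := Nat.one_le_two_pow
          have : 2 ^ (k+1) = 2 * 2 ^ k := by ring
          omega
        have h2 : (p * Polynomial.X * p).natDegree ≤ 2 ^ (k+1) - 1 := by
          refine le_trans (Polynomial.natDegree_mul_le) ?_
          have h3 := Polynomial.natDegree_mul_le (p := p) (q := Polynomial.X)
          have h4 : (Polynomial.X : Polynomial ℂ).natDegree ≤ 1 :=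
            Polynomial.natDegree_X_le
          have : (1:ℕ) ≤ 2 ^ k := Nat.one_le_two_pow
          have : 2 ^ (k+1) = 2 * 2 ^ k := by ring
          omega
        exact le_trans (Polynomial.natDegree_sub_le _ _) (max_le h1 h2)
      · rw [hX k, hp]
        simp only [map_sub, map_mul, Polynomial.aeval_C, Polynomial.aeval_X, map_ofNat]
        rw [hM, sub_mul, two_smul, two_mul, add_mul]
        noncomm_ring
  intro k hk
  obtain ⟨p, hdeg, hp⟩ := key k
  rw [hp, ← Matrix.mulVec_mulVec]
  have : Polynomial.aeval M p = ∑ j ∈ p.support, p.coeff j • M ^ j := by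
    conv_lhs => rw [p.as_sum_support_C_mul_X_pow]
    rw [map_sum]
    refine Finset.sum_congr rfl fun j hj => ?_
    simp [Algebra.smul_def]
  rw [this]
  rw [show (∑ j ∈ p.support, p.coeff j • M ^ j).mulVec (X₀.mulVec b)
        = ∑ j ∈ p.support, (p.coeff j • M ^ j).mulVec (X₀.mulVec b) from
      map_sum (AddMonoidHom.mk' (fun A : Matrix (Fin N) (Fin N) ℂ => A.mulVec (X₀.mulVec b))
      (fun A B => Matrix.add_mulVec A B _)) _ p.support]
  refine Submodule.sum_mem _ fun j hj => ?_
  show (p.coeff j • M ^ j).mulVec (X₀.mulVec b) ∈ _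
  rw [Matrix.smul_mulVec]
  refine Submodule.smul_mem _ _ (Submodule.subset_span ?_)
  exact ⟨j, le_trans (Polynomial.le_natDegree_of_mem_supp j hj) hdeg, rfl⟩
end
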